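/- Let m' ≥ m and n' ≥ n be positive integers. There exists a (necessarily unique) k-algebra homomorphism r_{(m,n,m',n')} : k[δ_{m,n}] → k[δ_{m',n'}] such that r_{(m,n,m',n')}(d_{l_0...l_{m-1}}) = d_{-m',...,-m-1,l_0,...,l_{m-1}} for every strictly increasing tuple -m ≤ l_0 < ... < l_{m-1} ≤ n-1. Moreover e_{(m',n',m,n)} ∘ r_{(m,n,m',n')} is the identity of k[δ_{m,n}]; in particular r_{(m,n,m',n')} is injective. -/

import Mathlib

open MvPolynomial

noncomputable section

/-- Row indices of the generic `(m+n) × m` matrix: integers `-m, ..., n-1`. -/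
abbrev RowI (m n : ℕ) : Type := ↥(Finset.Icc (-(m : ℤ)) ((n : ℤ) - 1))

/-- Column indices: integers `-m, ..., -1`. -/
abbrev ColI (m : ℕ) : Type := ↥(Finset.Icc (-(m : ℤ)) (-1 : ℤ))

/-- `k[a]_{m,n}`, the coordinate ring of generic `(m+n) × m` matrices. -/
abbrev MatRing (k : Type) [Field k] (m n : ℕ) : Type :=
  MvPolynomial (RowI m n × ColI m) k

/-- The maximal minor `d_I` on the rows in `I` (an `m`-element subset of `{-m,...,n-1}`). -/
def dMinor (k : Type) [Field k] (m n : ℕ) (I : Finset ℤ) (hI : I.card = m)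
    (hsub : I ⊆ Finset.Icc (-(m : ℤ)) ((n : ℤ) - 1)) : MatRing k m n :=
  Matrix.det (Matrix.of fun s t : Fin m =>
    (X (⟨I.orderEmbOfFin hI s, hsub (Finset.orderEmbOfFin_mem I hI s)⟩,
       ⟨-(m : ℤ) + (t : ℕ), by
          have := t.2
          simp only [Finset.mem_Icc]
          omega⟩) : MatRing k m n))

/-- `k[δ_{m,n}]`, the subalgebra generated by all the maximal minors. -/
def DeltaSub (k : Type) [Field k] (m n : ℕ) : Subalgebra k (MatRing k m n) :=
  Algebra.adjoin k {x | ∃ I hI hsub, x = dMinor k m n I hI hsub}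

/-- The substitution homomorphism `E_{(m',n',m,n)} : k[a]_{m',n'} → k[a]_{m,n}`. -/
def Emap (k : Type) [Field k] (m n m' n' : ℕ) : MatRing k m' n' →ₐ[k] MatRing k m n :=
  aeval fun p : RowI m' n' × ColI m' =>
    if h : (p.1.1 ∈ Finset.Icc (-(m : ℤ)) ((n : ℤ) - 1)) ∧
        (p.2.1 ∈ Finset.Icc (-(m : ℤ)) (-1 : ℤ)) then
      (X (⟨p.1.1, h.1⟩, ⟨p.2.1, h.2⟩) : MatRing k m n)
    else if p.1.1 = p.2.1 then 1 else 0


/-- The defining property of `r_{(m,n,m',n')}` on the maximal minors: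
`r(d_{l_0…l_{m-1}}) = d_{-m',…,-m-1,l_0,…,l_{m-1}}`. -/
def rProp (k : Type) [Field k] (m n m' n' : ℕ)
    (r : ↥(DeltaSub k m n) →ₐ[k] ↥(DeltaSub k m' n')) : Prop :=
  ∀ (I : Finset ℤ) (hI : I.card = m)
    (hsub : I ⊆ Finset.Icc (-(m : ℤ)) ((n : ℤ) - 1))
    (hmem : dMinor k m n I hI hsub ∈ DeltaSub k m n)
    (hcard : (Finset.Icc (-(m' : ℤ)) (-(m : ℤ) - 1) ∪ I).card = m')
    (hsub' : Finset.Icc (-(m' : ℤ)) (-(m : ℤ) - 1) ∪ I ⊆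
      Finset.Icc (-(m' : ℤ)) ((n' : ℤ) - 1)),
    (r ⟨dMinor k m n I hI hsub, hmem⟩ : MatRing k m' n') =
      dMinor k m' n' (Finset.Icc (-(m' : ℤ)) (-(m : ℤ) - 1) ∪ I) hcard hsub'

namespace Stmt1Aux

/-- Index type for the minors. -/
abbrev Idx (m n : ℕ) : Type :=
  {I : Finset ℤ // I.card = m ∧ I ⊆ Finset.Icc (-(m : ℤ)) ((n : ℤ) - 1)}

/-- The extra block of rows `{-m', ..., -m-1}`. -/
abbrev Jset (m m' : ℕ) : Finset ℤ := Finset.Icc (-(m' : ℤ)) (-(m : ℤ) - 1)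

variable (k : Type) [Field k] (m n m' n' : ℕ)

lemma card_J (hmm : m ≤ m') : (Jset m m').card = m' - m := by
  rw [Jset, Int.card_Icc]; omega

lemma card_JI (hmm : m ≤ m') {I : Finset ℤ} (hI : I.card = m)
    (hsub : I ⊆ Finset.Icc (-(m : ℤ)) ((n : ℤ) - 1)) : (Jset m m' ∪ I).card = m' := by
  rw [Finset.card_union_of_disjoint, card_J m m' hmm, hI]
  · omega
  · rw [Finset.disjoint_left]
    intro x hx hxI
    have h1 := Finset.mem_Icc.mp hx
    have h2 := Finset.mem_Icc.mp (hsub hxI)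
    omega

lemma sub_JI (hmm : m ≤ m') (hnn : n ≤ n') {I : Finset ℤ}
    (hsub : I ⊆ Finset.Icc (-(m : ℤ)) ((n : ℤ) - 1)) :
    Jset m m' ∪ I ⊆ Finset.Icc (-(m' : ℤ)) ((n' : ℤ) - 1) := by
  intro x hx
  rcases Finset.mem_union.mp hx with h | h
  · have := Finset.mem_Icc.mp h
    simp only [Finset.mem_Icc]; omega
  · have := Finset.mem_Icc.mp (hsub h)
    simp only [Finset.mem_Icc]; omega

/-- Value of the order embedding of `J ∪ I`. -/
lemma emb_val (hmm : m ≤ m') {I : Finset ℤ} (hI : I.card = m)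
    (hsub : I ⊆ Finset.Icc (-(m : ℤ)) ((n : ℤ) - 1))
    (hc : (Jset m m' ∪ I).card = m') (i : Fin m') :
    ((Jset m m' ∪ I).orderEmbOfFin hc i : ℤ) =
      if h : (i : ℕ) < m' - m then -(m' : ℤ) + (i : ℕ)
      else I.orderEmbOfFin hI ⟨(i : ℕ) - (m' - m), by have := i.2; omega⟩ := by
  have hfs : ∀ j : Fin m',
      (if h : (j : ℕ) < m' - m then -(m' : ℤ) + (j : ℕ)
        else I.orderEmbOfFin hI ⟨(j : ℕ) - (m' - m), by have := j.2; omega⟩) ∈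
        Jset m m' ∪ I := by
    intro j
    by_cases h : (j : ℕ) < m' - m
    · rw [dif_pos h]
      refine Finset.mem_union_left _ (Finset.mem_Icc.mpr ⟨by omega, by omega⟩)
    · rw [dif_neg h]
      exact Finset.mem_union_right _ (Finset.orderEmbOfFin_mem I hI _)
  have hmono : StrictMono (fun j : Fin m' =>
      if h : (j : ℕ) < m' - m then -(m' : ℤ) + (j : ℕ)
      else I.orderEmbOfFin hI ⟨(j : ℕ) - (m' - m), by have := j.2; omega⟩) := by
    intro a b hab
    dsimp only
    by_cases ha : (a : ℕ) < m' - m <;> by_cases hb : (b : ℕ) < m' - m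
    · rw [dif_pos ha, dif_pos hb]
      have : (a : ℕ) < (b : ℕ) := hab
      omega
    · rw [dif_pos ha, dif_neg hb]
      have h1 : (I.orderEmbOfFin hI ⟨(b : ℕ) - (m' - m), by have := b.2; omega⟩ : ℤ) ∈ I :=
        Finset.orderEmbOfFin_mem I hI _
      have h2 := Finset.mem_Icc.mp (hsub h1)
      omega
    · exact absurd (show (a : ℕ) < (b : ℕ) from hab) (by omega)
    · rw [dif_neg ha, dif_neg hb]
      exact (I.orderEmbOfFin hI).strictMono (by
        simp only [Fin.mk_lt_mk]
        have : (a : ℕ) < (b : ℕ) := hab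
        omega)
  have := Finset.orderEmbOfFin_unique hc hfs hmono
  exact (congrFun this i).symm ▸ rfl


lemma X_eq (k : Type) [Field k] {m n : ℕ} {p q : RowI m n × ColI m} (h1 : (p.1 : ℤ) = (q.1 : ℤ))
    (h2 : (p.2 : ℤ) = (q.2 : ℤ)) : (X p : MatRing k m n) = X q := by
  congr 1
  exact Prod.ext (Subtype.ext h1) (Subtype.ext h2)

/-- The reindexing equivalence `Fin (m'-m) ⊕ Fin m ≃ Fin m'`. -/
def eps (m m' : ℕ) (hmm : m ≤ m') : Fin (m' - m) ⊕ Fin m ≃ Fin m' :=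
  finSumFinEquiv.trans (finCongr (by omega))

lemma eps_left {m m' : ℕ} (hmm : m ≤ m') (s : Fin (m' - m)) :
    ((eps m m' hmm (Sum.inl s) : Fin m') : ℕ) = s := by
  simp [eps]

lemma eps_right {m m' : ℕ} (hmm : m ≤ m') (t : Fin m) :
    ((eps m m' hmm (Sum.inr t) : Fin m') : ℕ) = (m' - m) + t := by
  simp [eps]

lemma emb_val_left {m n m' : ℕ} (hmm : m ≤ m') {I : Finset ℤ} (hI : I.card = m)
    (hsub : I ⊆ Finset.Icc (-(m : ℤ)) ((n : ℤ) - 1))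
    (hc : (Jset m m' ∪ I).card = m') (s : Fin (m' - m)) :
    ((Jset m m' ∪ I).orderEmbOfFin hc (eps m m' hmm (Sum.inl s)) : ℤ) = -(m' : ℤ) + (s : ℕ) := by
  rw [emb_val m n m' hmm hI hsub hc, dif_pos (by rw [eps_left hmm]; exact s.2), eps_left hmm]

lemma emb_val_right {m n m' : ℕ} (hmm : m ≤ m') {I : Finset ℤ} (hI : I.card = m)
    (hsub : I ⊆ Finset.Icc (-(m : ℤ)) ((n : ℤ) - 1))
    (hc : (Jset m m' ∪ I).card = m') (s : Fin m) :
    ((Jset m m' ∪ I).orderEmbOfFin hc (eps m m' hmm (Sum.inr s)) : ℤ) =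
      I.orderEmbOfFin hI s := by
  rw [emb_val m n m' hmm hI hsub hc, dif_neg (by rw [eps_right hmm]; omega)]
  congr 1
  refine Fin.ext ?_
  show ((eps m m' hmm (Sum.inr s) : Fin m') : ℕ) - (m' - m) = (s : ℕ)
  rw [eps_right hmm]
  omega

lemma Emap_dMinor (k : Type) [Field k] (m n m' n' : ℕ) (hmm : m ≤ m') (hnn : n ≤ n')
    {I : Finset ℤ} (hI : I.card = m)
    (hsub : I ⊆ Finset.Icc (-(m : ℤ)) ((n : ℤ) - 1))
    (hc : (Jset m m' ∪ I).card = m')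
    (hs : Jset m m' ∪ I ⊆ Finset.Icc (-(m' : ℤ)) ((n' : ℤ) - 1)) :
    Emap k m n m' n' (dMinor k m' n' (Jset m m' ∪ I) hc hs) = dMinor k m n I hI hsub := by
  have hE : ∀ p : RowI m' n' × ColI m', Emap k m n m' n' (X p) =
      (if h : (p.1.1 ∈ Finset.Icc (-(m : ℤ)) ((n : ℤ) - 1)) ∧
          (p.2.1 ∈ Finset.Icc (-(m : ℤ)) (-1 : ℤ)) then
        (X (⟨p.1.1, h.1⟩, ⟨p.2.1, h.2⟩) : MatRing k m n)
      else if p.1.1 = p.2.1 then 1 else 0) := fun p => aeval_X _ p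
  rw [dMinor, AlgHom.map_det, ← Matrix.det_submatrix_equiv_self (eps m m' hmm)]
  have hcol : ∀ t : Fin m, (-(m : ℤ) + (t : ℕ)) ∈ Finset.Icc (-(m : ℤ)) (-1 : ℤ) := by
    intro t
    have := t.2
    simp only [Finset.mem_Icc]
    omega
  trans (Matrix.fromBlocks (1 : Matrix (Fin (m' - m)) (Fin (m' - m)) (MatRing k m n)) 0 0
      (Matrix.of fun s t : Fin m =>
        (X (⟨I.orderEmbOfFin hI s, hsub (Finset.orderEmbOfFin_mem I hI s)⟩,
          ⟨-(m : ℤ) + (t : ℕ), hcol t⟩) : MatRing k m n))).det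
  · congr 1
    refine Matrix.ext fun z w => ?_
    rcases z with s | s <;> rcases w with t | t <;>
      simp only [Matrix.submatrix_apply, AlgHom.mapMatrix_apply, Matrix.map_apply,
        Matrix.of_apply, hE, Matrix.fromBlocks_apply₁₁, Matrix.fromBlocks_apply₁₂,
        Matrix.fromBlocks_apply₂₁, Matrix.fromBlocks_apply₂₂, Matrix.zero_apply,
        Matrix.one_apply]
    -- (inl, inl) : identity block
    · have hs2 := s.2
      rw [dif_neg (by
        rintro ⟨h1, -⟩
        rw [emb_val_left hmm hI hsub hc] at h1
        have := Finset.mem_Icc.mp h1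
        omega)]
      by_cases hst : s = t
      · subst hst
        rw [if_pos (by rw [emb_val_left hmm hI hsub hc, eps_left hmm]), if_pos rfl]
      · rw [if_neg (by
          intro h
          rw [emb_val_left hmm hI hsub hc, eps_left hmm] at h
          exact hst (Fin.ext (by omega))), if_neg hst]
    -- (inl, inr) : zero block
    · have hs2 := s.2
      have ht2 := t.2
      rw [dif_neg (by
        rintro ⟨h1, -⟩
        rw [emb_val_left hmm hI hsub hc] at h1
        have := Finset.mem_Icc.mp h1
        omega)]
      rw [if_neg (by
        intro h
        rw [emb_val_left hmm hI hsub hc, eps_right hmm] at h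
        omega)]
    -- (inr, inl) : zero block
    · have hs2 := s.2
      have ht2 := t.2
      have hmemI := Finset.mem_Icc.mp (hsub (Finset.orderEmbOfFin_mem I hI s))
      rw [dif_neg (by
        rintro ⟨-, h2⟩
        rw [eps_left hmm] at h2
        have := Finset.mem_Icc.mp h2
        omega)]
      rw [if_neg (by
        intro h
        rw [emb_val_right hmm hI hsub hc, eps_left hmm] at h
        omega)]
    -- (inr, inr) : the small minor
    · have hs2 := s.2
      have ht2 := t.2
      have hmemI := Finset.mem_Icc.mp (hsub (Finset.orderEmbOfFin_mem I hI s))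
      rw [dif_pos ⟨by
          rw [emb_val_right hmm hI hsub hc]
          exact hsub (Finset.orderEmbOfFin_mem I hI s), by
          simp only [Finset.mem_Icc]
          rw [eps_right hmm]
          push_cast
          omega⟩]
      apply X_eq
      · exact emb_val_right hmm hI hsub hc s
      · simp only
        rw [eps_right hmm]
        push_cast
        omega
  · rw [Matrix.det_fromBlocks_zero₂₁, Matrix.det_one, one_mul, dMinor]


end Stmt1Aux

namespace Stmt1Aux

/-- Each maximal minor is homogeneous of degree `m`. -/
lemma dMinor_homogeneous (k : Type) [Field k] (m n : ℕ) {I : Finset ℤ} (hI : I.card = m)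
    (hsub : I ⊆ Finset.Icc (-(m : ℤ)) ((n : ℤ) - 1)) :
    (dMinor k m n I hI hsub).IsHomogeneous m := by
  rw [dMinor, Matrix.det_apply]
  apply MvPolynomial.IsHomogeneous.sum
  intro σ _
  have hprod : (∏ i : Fin m, (Matrix.of fun s t : Fin m =>
      (X (⟨I.orderEmbOfFin hI s, hsub (Finset.orderEmbOfFin_mem I hI s)⟩,
        ⟨-(m : ℤ) + (t : ℕ), by
          have := t.2
          simp only [Finset.mem_Icc]
          omega⟩) : MatRing k m n)) (σ i) i).IsHomogeneous m := by
    have := MvPolynomial.IsHomogeneous.prod Finset.univ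
      (fun i : Fin m => (Matrix.of fun s t : Fin m =>
        (X (⟨I.orderEmbOfFin hI s, hsub (Finset.orderEmbOfFin_mem I hI s)⟩,
          ⟨-(m : ℤ) + (t : ℕ), by
            have := t.2
            simp only [Finset.mem_Icc]
            omega⟩) : MatRing k m n)) (σ i) i) (fun _ => 1)
      (fun i _ => isHomogeneous_X _ _)
    simpa using this
  rw [Units.smul_def, zsmul_eq_mul,
    ← map_intCast (C : k →+* MvPolynomial (RowI m n × ColI m) k)]
  exact hprod.C_mul _

/-- Evaluating a homogeneous polynomial at `c • g` pulls out `c ^ e`. -/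
lemma aeval_mul_homog {k S ι : Type} [Field k] [CommRing S] [Algebra k S]
    {P : MvPolynomial ι k} {e : ℕ} (hP : P.IsHomogeneous e) (c : S) (g : ι → S) :
    aeval (fun i => c * g i) P = c ^ e * aeval g P := by
  rw [aeval_def, aeval_def, eval₂_eq, eval₂_eq, Finset.mul_sum]
  apply Finset.sum_congr rfl
  intro d hd
  have hdeg : ∑ i ∈ d.support, d i = e := by
    have h1 := hP (MvPolynomial.mem_support_iff.mp hd)
    rw [show (1 : ι → ℕ) = fun _ => 1 from rfl, ← Finsupp.degree_eq_weight_one] at h1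
    exact h1
  rw [show (∏ i ∈ d.support, (c * g i) ^ d i)
      = (∏ i ∈ d.support, c ^ d i) * ∏ i ∈ d.support, g i ^ d i by
    rw [← Finset.prod_mul_distrib]
    exact Finset.prod_congr rfl fun i _ => mul_pow _ _ _]
  rw [Finset.prod_pow_eq_pow_sum, hdeg]
  ring

end Stmt1Aux

namespace Stmt1Aux

section PhiDefs

variable (k : Type) [Field k]

/-- Row of the big matrix with index `-m' + s`, `s < m' - m`. -/
def rowB (m n m' n' : ℕ) (s : Fin (m' - m)) : RowI m' n' :=
  ⟨-(m' : ℤ) + (s : ℕ), by have := s.2; simp only [Finset.mem_Icc]; omega⟩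

/-- Column of the big matrix with index `-m' + s`, `s < m' - m`. -/
def colB (m m' : ℕ) (s : Fin (m' - m)) : ColI m' :=
  ⟨-(m' : ℤ) + (s : ℕ), by have := s.2; simp only [Finset.mem_Icc]; omega⟩

/-- Inclusion of small row indices into big row indices. -/
def rowS (m n m' n' : ℕ) (hmm : m ≤ m') (hnn : n ≤ n') (i : RowI m n) : RowI m' n' :=
  ⟨i.1, by have := Finset.mem_Icc.mp i.2; simp only [Finset.mem_Icc]; omega⟩

/-- Inclusion of small column indices into big column indices. -/
def colS (m m' : ℕ) (hmm : m ≤ m') (j : ColI m) : ColI m' :=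
  ⟨j.1, by have := Finset.mem_Icc.mp j.2; simp only [Finset.mem_Icc]; omega⟩

/-- The generic `(m'-m) × (m'-m)` top-left block. -/
def Amat (m n' m' : ℕ) : Matrix (Fin (m' - m)) (Fin (m' - m)) (MatRing k m' n') :=
  Matrix.of fun s t => X (rowB m n' m' n' s, colB m m' t)

/-- Its determinant. -/
def adet (m n' m' : ℕ) : MatRing k m' n' := (Amat k m n' m').det

/-- The substitution defining `Φ`. -/
def gPhi (m n m' n' : ℕ) (hmm : m ≤ m') (hnn : n ≤ n') (p : RowI m n × ColI m) :
    MatRing k m' n' :=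
  adet k m n' m' * X (rowS m n m' n' hmm hnn p.1, colS m m' hmm p.2) -
    ∑ u : Fin (m' - m), ∑ v : Fin (m' - m),
      X (rowS m n m' n' hmm hnn p.1, colB m m' u) * (Amat k m n' m').adjugate u v *
        X (rowB m n' m' n' v, colS m m' hmm p.2)

lemma adet_ne (m n' m' : ℕ) : adet k m n' m' ≠ 0 := by
  intro h
  have h2 := congrArg
    (aeval (R := k) fun p : RowI m' n' × ColI m' => if p.1.1 = p.2.1 then (1 : k) else 0) h
  rw [map_zero, adet, AlgHom.map_det] at h2
  have h3 : (aeval (R := k) fun p : RowI m' n' × ColI m' =>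
        if p.1.1 = p.2.1 then (1 : k) else 0).mapMatrix (Amat k m n' m')
      = (1 : Matrix (Fin (m' - m)) (Fin (m' - m)) k) := by
    refine Matrix.ext fun s t => ?_
    simp only [AlgHom.mapMatrix_apply, Matrix.map_apply, Amat, Matrix.of_apply, aeval_X,
      Matrix.one_apply, rowB, colB]
    by_cases hst : s = t
    · subst hst
      rw [if_pos rfl, if_pos rfl]
    · rw [if_neg (fun hh => hst (Fin.ext (by omega))), if_neg hst]
  rw [h3, Matrix.det_one] at h2
  exact one_ne_zero h2

end PhiDefs

/-- Schur-complement style determinant identity over a domain. -/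
lemma schur_aux {R : Type*} [CommRing R] [IsDomain R] {p q : ℕ} (hp : 0 < p)
    (A : Matrix (Fin q) (Fin q) R) (B : Matrix (Fin q) (Fin p) R)
    (C : Matrix (Fin p) (Fin q) R) (D : Matrix (Fin p) (Fin p) R)
    (hA : A.det ≠ 0) :
    (A.det • D - C * A.adjugate * B).det
      = A.det ^ (p - 1) * (Matrix.fromBlocks A B C D).det := by
  have hinj : Function.Injective (algebraMap R (FractionRing R)) :=
    IsFractionRing.injective R (FractionRing R)
  apply hinj
  set φ := algebraMap R (FractionRing R) with hphi
  rw [map_mul, map_pow, RingHom.map_det, RingHom.map_det]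
  simp only [RingHom.mapMatrix_apply]
  have hdet : (A.map φ).det = φ A.det := by
    rw [RingHom.map_det φ A, RingHom.mapMatrix_apply]
  have hU : IsUnit (A.map φ).det := by
    rw [hdet]
    exact isUnit_iff_ne_zero.mpr fun h0 => hA (hinj (by simpa using h0))
  letI := (A.map φ).invertibleOfIsUnitDet hU
  have hAd : (A.det • D - C * A.adjugate * B).map φ
      = φ A.det • (D.map φ) - (C.map φ) * (A.map φ).adjugate * (B.map φ) := by
    have hadjm : (A.map φ).adjugate = A.adjugate.map φ := by
      have := RingHom.map_adjugate φ A
      simp only [RingHom.mapMatrix_apply] at this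
      exact this.symm
    rw [hadjm]
    refine Matrix.ext fun i j => ?_
    simp only [Matrix.map_apply, Matrix.sub_apply, Matrix.smul_apply, smul_eq_mul,
      Matrix.mul_apply, map_sub, map_mul, map_sum]
  have hadj : (A.map φ).adjugate = (A.map φ).det • ⅟(A.map φ) := by
    rw [Matrix.invOf_eq_nonsing_inv, Matrix.inv_def, smul_smul,
      Ring.mul_inverse_cancel _ hU, one_smul]
  have hFB : (Matrix.fromBlocks A B C D).map φ
      = Matrix.fromBlocks (A.map φ) (B.map φ) (C.map φ) (D.map φ) :=
    Matrix.fromBlocks_map A B C D φ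
  rw [hAd, hadj, hdet, RingHom.map_det φ (Matrix.fromBlocks A B C D), RingHom.mapMatrix_apply, hFB]
  rw [show φ A.det • D.map φ - C.map φ * (φ A.det • ⅟(A.map φ)) * B.map φ
      = φ A.det • (D.map φ - C.map φ * ⅟(A.map φ) * B.map φ) by
    rw [Matrix.mul_smul, Matrix.smul_mul, smul_sub]]
  rw [Matrix.det_smul, Matrix.det_fromBlocks₁₁, hdet, Fintype.card_fin]
  rw [show φ A.det ^ p = φ A.det ^ (p - 1) * φ A.det by
    rw [← pow_succ]
    congr 1
    omega]
  ring

end Stmt1Aux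

namespace Stmt1Aux

section PhiKey

variable (k : Type) [Field k] (m n m' n' : ℕ)

/-- The `C`, `B`, `D` blocks attached to a minor index. -/
def Cmat (hmm : m ≤ m') (hnn : n ≤ n') {I : Finset ℤ} (hI : I.card = m)
    (hsub : I ⊆ Finset.Icc (-(m : ℤ)) ((n : ℤ) - 1)) :
    Matrix (Fin m) (Fin (m' - m)) (MatRing k m' n') :=
  Matrix.of fun s u =>
    X (rowS m n m' n' hmm hnn ⟨I.orderEmbOfFin hI s, hsub (Finset.orderEmbOfFin_mem I hI s)⟩,
      colB m m' u)

def Bmat (hmm : m ≤ m') (hnn : n ≤ n') : Matrix (Fin (m' - m)) (Fin m) (MatRing k m' n') :=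
  Matrix.of fun u t =>
    X (rowB m n' m' n' u, colS m m' hmm ⟨-(m : ℤ) + (t : ℕ), by
      have := t.2; simp only [Finset.mem_Icc]; omega⟩)

def Dmat (hmm : m ≤ m') (hnn : n ≤ n') {I : Finset ℤ} (hI : I.card = m)
    (hsub : I ⊆ Finset.Icc (-(m : ℤ)) ((n : ℤ) - 1)) :
    Matrix (Fin m) (Fin m) (MatRing k m' n') :=
  Matrix.of fun s t =>
    X (rowS m n m' n' hmm hnn ⟨I.orderEmbOfFin hI s, hsub (Finset.orderEmbOfFin_mem I hI s)⟩,
      colS m m' hmm ⟨-(m : ℤ) + (t : ℕ), by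
        have := t.2; simp only [Finset.mem_Icc]; omega⟩)

lemma Phi_step1 (hmm : m ≤ m') (hnn : n ≤ n') {I : Finset ℤ} (hI : I.card = m)
    (hsub : I ⊆ Finset.Icc (-(m : ℤ)) ((n : ℤ) - 1)) :
    aeval (gPhi k m n m' n' hmm hnn) (dMinor k m n I hI hsub)
      = (adet k m n' m' • Dmat k m n m' n' hmm hnn hI hsub -
          Cmat k m n m' n' hmm hnn hI hsub * (Amat k m n' m').adjugate *
          Bmat k m n m' n' hmm hnn).det := by
  rw [dMinor, AlgHom.map_det]
  congr 1
  refine Matrix.ext fun s t => ?_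
  simp only [AlgHom.mapMatrix_apply, Matrix.map_apply, Matrix.of_apply, aeval_X,
    Matrix.sub_apply, Matrix.smul_apply, smul_eq_mul, Cmat, Bmat, Dmat]
  rw [gPhi]
  congr 1
  rw [Matrix.mul_apply, Finset.sum_comm]
  apply Finset.sum_congr rfl
  intro v _
  rw [Matrix.mul_apply, Finset.sum_mul]
  apply Finset.sum_congr rfl
  intro u _
  simp only [Matrix.of_apply]

lemma Phi_step2 (hmm : m ≤ m') (hnn : n ≤ n') {I : Finset ℤ} (hI : I.card = m)
    (hsub : I ⊆ Finset.Icc (-(m : ℤ)) ((n : ℤ) - 1))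
    (hc : (Jset m m' ∪ I).card = m')
    (hs : Jset m m' ∪ I ⊆ Finset.Icc (-(m' : ℤ)) ((n' : ℤ) - 1)) :
    dMinor k m' n' (Jset m m' ∪ I) hc hs
      = (Matrix.fromBlocks (Amat k m n' m') (Bmat k m n m' n' hmm hnn)
          (Cmat k m n m' n' hmm hnn hI hsub) (Dmat k m n m' n' hmm hnn hI hsub)).det := by
  rw [dMinor, ← Matrix.det_submatrix_equiv_self (eps m m' hmm)]
  congr 1
  refine Matrix.ext fun z w => ?_
  rcases z with s | s <;> rcases w with t | t <;>
    simp only [Matrix.submatrix_apply, Matrix.of_apply, Matrix.fromBlocks_apply₁₁,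
      Matrix.fromBlocks_apply₁₂, Matrix.fromBlocks_apply₂₁, Matrix.fromBlocks_apply₂₂,
      Amat, Bmat, Cmat, Dmat, rowB, colB, rowS, colS] <;>
    apply X_eq <;> simp only []
  · exact emb_val_left hmm hI hsub hc s
  · rw [eps_left hmm]
  · exact emb_val_left hmm hI hsub hc s
  · rw [eps_right hmm]; push_cast; omega
  · exact emb_val_right hmm hI hsub hc s
  · rw [eps_left hmm]
  · exact emb_val_right hmm hI hsub hc s
  · rw [eps_right hmm]; push_cast; omega

lemma Phi_dMinor (hm : 0 < m) (hmm : m ≤ m') (hnn : n ≤ n') {I : Finset ℤ} (hI : I.card = m)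
    (hsub : I ⊆ Finset.Icc (-(m : ℤ)) ((n : ℤ) - 1))
    (hc : (Jset m m' ∪ I).card = m')
    (hs : Jset m m' ∪ I ⊆ Finset.Icc (-(m' : ℤ)) ((n' : ℤ) - 1)) :
    aeval (gPhi k m n m' n' hmm hnn) (dMinor k m n I hI hsub)
      = adet k m n' m' ^ (m - 1) * dMinor k m' n' (Jset m m' ∪ I) hc hs := by
  rw [Phi_step1 k m n m' n' hmm hnn hI hsub, Phi_step2 k m n m' n' hmm hnn hI hsub hc hs]
  exact schur_aux hm _ _ _ _ (adet_ne k m n' m')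

end PhiKey

end Stmt1Aux

namespace Stmt1Aux

section Maps

variable (k : Type) [Field k] (m n m' n' : ℕ)

def dsmall (i : Idx m n) : MatRing k m n := dMinor k m n i.1 i.2.1 i.2.2

def dbig (hmm : m ≤ m') (hnn : n ≤ n') (i : Idx m n) : MatRing k m' n' :=
  dMinor k m' n' (Jset m m' ∪ i.1) (card_JI m n m' hmm i.2.1 i.2.2)
    (sub_JI m n m' n' hmm hnn i.2.2)

/-- F3: relations among the small minors hold among the big ones. -/
lemma ker_le (hm : 0 < m) (hmm : m ≤ m') (hnn : n ≤ n')
    (P : MvPolynomial (Idx m n) k) (hP : aeval (dsmall k m n) P = 0) :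
    aeval (dbig k m n m' n' hmm hnn) P = 0 := by
  -- each homogeneous component is killed by aeval dsmall
  have hhom : ∀ i : Idx m n, (dsmall k m n i).IsHomogeneous m := fun i =>
    dMinor_homogeneous k m n i.2.1 i.2.2
  have hcomp : ∀ e, aeval (dsmall k m n) (homogeneousComponent e P) = 0 := by
    intro e
    by_cases he : e ≤ P.totalDegree
    · have hsum : ∑ i ∈ Finset.range (P.totalDegree + 1),
          aeval (dsmall k m n) (homogeneousComponent i P) = 0 := by
        rw [← map_sum, sum_homogeneousComponent, hP]
      have h0 := congrArg (homogeneousComponent (σ := RowI m n × ColI m) (R := k) (m * e)) hsum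
      rw [map_sum, map_zero] at h0
      rw [Finset.sum_congr rfl (fun i _ => ?_)] at h0
      · rwa [Finset.sum_ite_eq' (Finset.range (P.totalDegree + 1))
          e (fun i => aeval (dsmall k m n) (homogeneousComponent i P)),
          if_pos (Finset.mem_range.mpr (by omega))] at h0
      · have hhi : (aeval (dsmall k m n) (homogeneousComponent i P)).IsHomogeneous (m * i) :=
          (homogeneousComponent_isHomogeneous i P).aeval _ hhom
        rw [homogeneousComponent_of_mem ((mem_homogeneousSubmodule _ _).mpr hhi)]
        by_cases hie : i = e
        · subst hie
          rw [if_pos rfl, if_pos rfl]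
        · rw [if_neg (fun hme => hie (Nat.eq_of_mul_eq_mul_left hm hme).symm), if_neg hie]
    · rw [homogeneousComponent_eq_zero _ _ (by omega), map_zero]
  -- now transfer to the big side, component by component
  have hbig : ∀ e, aeval (dbig k m n m' n' hmm hnn) (homogeneousComponent e P) = 0 := by
    intro e
    have h1 := congrArg (aeval (gPhi k m n m' n' hmm hnn)) (hcomp e)
    rw [map_zero] at h1
    have h2 : (aeval (gPhi k m n m' n' hmm hnn)).comp
        (aeval (dsmall k m n) : MvPolynomial (Idx m n) k →ₐ[k] MatRing k m n)
        = aeval fun i => adet k m n' m' ^ (m - 1) * dbig k m n m' n' hmm hnn i := by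
      rw [comp_aeval]
      congr 1
      funext i
      exact Phi_dMinor k m n m' n' hm hmm hnn i.2.1 i.2.2 _ _
    have h3 : aeval (fun i => adet k m n' m' ^ (m - 1) * dbig k m n m' n' hmm hnn i)
        (homogeneousComponent e P) = 0 := by
      rw [← h2]
      exact h1
    rw [aeval_mul_homog (homogeneousComponent_isHomogeneous e P)] at h3
    rcases mul_eq_zero.mp h3 with h | h
    · exact absurd h (pow_ne_zero _ (pow_ne_zero _ (adet_ne k m n' m')))
    · exact h
  calc aeval (dbig k m n m' n' hmm hnn) P
      = aeval (dbig k m n m' n' hmm hnn)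
          (∑ i ∈ Finset.range (P.totalDegree + 1), homogeneousComponent i P) := by
        rw [sum_homogeneousComponent]
    _ = 0 := by
        rw [map_sum]
        exact Finset.sum_eq_zero fun i _ => hbig i

end Maps

end Stmt1Aux

set_option maxHeartbeats 2000000 in
set_option synthInstance.maxHeartbeats 400000 in
open Stmt1Aux in
theorem stmt1 (k : Type) [Field k] (m n m' n' : ℕ) (hm : 0 < m) (hn : 0 < n)
    (hmm : m ≤ m') (hnn : n ≤ n') :
    (∃! r : ↥(DeltaSub k m n) →ₐ[k] ↥(DeltaSub k m' n'), rProp k m n m' n' r) ∧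
    (∀ r : ↥(DeltaSub k m n) →ₐ[k] ↥(DeltaSub k m' n'), rProp k m n m' n' r →
      (∀ x : ↥(DeltaSub k m n),
        Emap k m n m' n' ((r x : MatRing k m' n')) = (x : MatRing k m n)) ∧
      Function.Injective r) := by
  classical
  set fs : MvPolynomial (Idx m n) k →ₐ[k] MatRing k m n := aeval (dsmall k m n) with hfs
  set fb : MvPolynomial (Idx m n) k →ₐ[k] MatRing k m' n' :=
    aeval (dbig k m n m' n' hmm hnn) with hfb
  have hEfb : ∀ P, Emap k m n m' n' (fb P) = fs P := by
    intro P
    have hcmp : (Emap k m n m' n').comp fb = fs := by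
      rw [hfb, hfs, comp_aeval]
      congr 1
      funext i
      exact Emap_dMinor k m n m' n' hmm hnn i.2.1 i.2.2 _ _
    exact congrFun (congrArg DFunLike.coe hcmp) P
  have hDS : DeltaSub k m n = fs.range := by
    rw [DeltaSub, hfs, ← Algebra.adjoin_range_eq_range_aeval]
    congr 1
    ext x
    constructor
    · rintro ⟨I, hI, hsub, rfl⟩
      exact ⟨⟨I, hI, hsub⟩, rfl⟩
    · rintro ⟨⟨I, hI, hsub⟩, rfl⟩
      exact ⟨I, hI, hsub, rfl⟩
  set A' : Subalgebra k (MatRing k m' n') :=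
    Algebra.adjoin k (Set.range (dbig k m n m' n' hmm hnn)) with hA'
  have hA'r : A' = fb.range := by rw [hA', hfb, Algebra.adjoin_range_eq_range_aeval]
  have hA'le : A' ≤ DeltaSub k m' n' := by
    rw [hA']
    apply Algebra.adjoin_le
    rintro x ⟨i, rfl⟩
    exact Algebra.subset_adjoin ⟨Jset m m' ∪ i.1, card_JI m n m' hmm i.2.1 i.2.2,
      sub_JI m n m' n' hmm hnn i.2.2, rfl⟩
  have hmapsto : ∀ x : A', ((Emap k m n m' n').comp A'.val) x ∈ DeltaSub k m n := by
    intro x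
    obtain ⟨P, hPx0⟩ : (x : MatRing k m' n') ∈ fb.range :=
      (SetLike.ext_iff.mp hA'r (x : MatRing k m' n')).mp x.2
    have hPx : fb P = (x : MatRing k m' n') := hPx0
    have h2 : ((Emap k m n m' n').comp A'.val) x = fs P := by
      show Emap k m n m' n' (x : MatRing k m' n') = fs P
      rw [← hPx, hEfb]
    rw [h2]
    exact (SetLike.ext_iff.mp hDS (fs P)).mpr ⟨P, rfl⟩
  set E' : A' →ₐ[k] ↥(DeltaSub k m n) :=
    ((Emap k m n m' n').comp A'.val).codRestrict (DeltaSub k m n) hmapsto with hE'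
  have hE'val : ∀ x : A', (E' x : MatRing k m n) = Emap k m n m' n' (x : MatRing k m' n') :=
    fun x => rfl
  have hinj : Function.Injective E' := by
    rw [injective_iff_map_eq_zero]
    intro x hx0
    obtain ⟨P, hPx0⟩ : (x : MatRing k m' n') ∈ fb.range :=
      (SetLike.ext_iff.mp hA'r (x : MatRing k m' n')).mp x.2
    have hPx : fb P = (x : MatRing k m' n') := hPx0
    have h1 : Emap k m n m' n' (x : MatRing k m' n') = 0 := by
      have h := congrArg Subtype.val hx0
      rw [← hE'val]
      simpa using h
    have h2 : fs P = 0 := by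
      rw [← hEfb, hPx]
      exact h1
    have h3 : fb P = 0 := ker_le k m n m' n' hm hmm hnn P h2
    apply Subtype.ext
    rw [← hPx, h3]
    simp
  have hsurj : Function.Surjective E' := by
    intro y
    obtain ⟨P, hPy0⟩ : (y : MatRing k m n) ∈ fs.range :=
      (SetLike.ext_iff.mp hDS (y : MatRing k m n)).mp y.2
    have hPy : fs P = (y : MatRing k m n) := hPy0
    have hmem : fb P ∈ A' := (SetLike.ext_iff.mp hA'r (fb P)).mpr ⟨P, rfl⟩
    refine ⟨⟨fb P, hmem⟩, ?_⟩
    apply Subtype.ext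
    rw [hE'val]
    show Emap k m n m' n' (fb P) = (y : MatRing k m n)
    rw [hEfb, hPy]
  set eqv := AlgEquiv.ofBijective E' ⟨hinj, hsurj⟩ with heqv
  set r : ↥(DeltaSub k m n) →ₐ[k] ↥(DeltaSub k m' n') :=
    (Subalgebra.inclusion hA'le).comp (eqv.symm : ↥(DeltaSub k m n) ≃ₐ[k] A') with hr
  have hrP : rProp k m n m' n' r := by
    intro I hI hsub hmem hcard hsub'
    have hbmem : dbig k m n m' n' hmm hnn ⟨I, hI, hsub⟩ ∈ A' := by
      rw [hA']
      exact Algebra.subset_adjoin ⟨⟨I, hI, hsub⟩, rfl⟩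
    have hkey : eqv.symm ⟨dMinor k m n I hI hsub, hmem⟩
        = ⟨dbig k m n m' n' hmm hnn ⟨I, hI, hsub⟩, hbmem⟩ := by
      rw [AlgEquiv.symm_apply_eq]
      apply Subtype.ext
      have hcoe : (eqv ⟨dbig k m n m' n' hmm hnn ⟨I, hI, hsub⟩, hbmem⟩ : MatRing k m n)
          = Emap k m n m' n' (dbig k m n m' n' hmm hnn ⟨I, hI, hsub⟩) := rfl
      rw [hcoe]
      exact (Emap_dMinor k m n m' n' hmm hnn hI hsub _ _).symm
    rw [hr]
    show ((Subalgebra.inclusion hA'le) (eqv.symm ⟨dMinor k m n I hI hsub, hmem⟩)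
      : MatRing k m' n') = _
    rw [hkey]
    rfl
  have hERid : ∀ r' : ↥(DeltaSub k m n) →ₐ[k] ↥(DeltaSub k m' n'), rProp k m n m' n' r' →
      ∀ x : ↥(DeltaSub k m n),
        Emap k m n m' n' ((r' x : MatRing k m' n')) = (x : MatRing k m n) := by
    intro r' hr' x
    obtain ⟨x, hx⟩ := x
    induction hx using Algebra.adjoin_induction with
    | mem y hy =>
      obtain ⟨I, hI, hsub, rfl⟩ := hy
      refine (congrArg (Emap k m n m' n')
        (hr' I hI hsub _ (card_JI m n m' hmm hI hsub) (sub_JI m n m' n' hmm hnn hsub))).trans ?_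
      exact Emap_dMinor k m n m' n' hmm hnn hI hsub _ _
    | algebraMap c =>
      show Emap k m n m' n' ((r' (algebraMap k _ c) : MatRing k m' n')) = _
      rw [AlgHom.commutes]
      rw [show ((algebraMap k ↥(DeltaSub k m' n') c : ↥(DeltaSub k m' n')) : MatRing k m' n')
          = algebraMap k (MatRing k m' n') c from rfl]
      rw [AlgHom.commutes]
    | add y z hy hz ihy ihz =>
      have h1 : (⟨y + z, add_mem hy hz⟩ : ↥(DeltaSub k m n)) = ⟨y, hy⟩ + ⟨z, hz⟩ := rfl
      rw [h1, map_add, Subalgebra.coe_add, map_add, ihy, ihz]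
      rfl
    | mul y z hy hz ihy ihz =>
      have h1 : (⟨y * z, mul_mem hy hz⟩ : ↥(DeltaSub k m n)) = ⟨y, hy⟩ * ⟨z, hz⟩ := rfl
      rw [h1, map_mul, Subalgebra.coe_mul, map_mul, ihy, ihz]
      rfl
  have huniq : ∀ r₁ r₂ : ↥(DeltaSub k m n) →ₐ[k] ↥(DeltaSub k m' n'),
      rProp k m n m' n' r₁ → rProp k m n m' n' r₂ → r₁ = r₂ := by
    intro r₁ r₂ h₁ h₂
    refine AlgHom.ext fun x => ?_
    obtain ⟨x, hx⟩ := x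
    induction hx using Algebra.adjoin_induction with
    | mem y hy =>
      obtain ⟨I, hI, hsub, rfl⟩ := hy
      apply Subtype.ext
      exact (h₁ I hI hsub _ (card_JI m n m' hmm hI hsub) (sub_JI m n m' n' hmm hnn hsub)).trans
        (h₂ I hI hsub _ (card_JI m n m' hmm hI hsub) (sub_JI m n m' n' hmm hnn hsub)).symm
    | algebraMap c =>
      show r₁ (algebraMap k _ c) = r₂ (algebraMap k _ c)
      rw [AlgHom.commutes, AlgHom.commutes]
    | add y z hy hz ihy ihz =>
      have h1 : (⟨y + z, add_mem hy hz⟩ : ↥(DeltaSub k m n)) = ⟨y, hy⟩ + ⟨z, hz⟩ := rfl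
      rw [h1, map_add, map_add, ihy, ihz]
    | mul y z hy hz ihy ihz =>
      have h1 : (⟨y * z, mul_mem hy hz⟩ : ↥(DeltaSub k m n)) = ⟨y, hy⟩ * ⟨z, hz⟩ := rfl
      rw [h1, map_mul, map_mul, ihy, ihz]
  refine ⟨⟨r, hrP, fun r' hr' => huniq r' r hr' hrP⟩, fun r' hr' => ⟨hERid r' hr', ?_⟩⟩
  intro x y hxy
  have hx := hERid r' hr' x
  have hy := hERid r' hr' y
  apply Subtype.ext
  rw [← hx, ← hy, hxy]

end
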